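/- Let $\xi \in A_0$ and $M_m = E^P\{\xi \mid \mathcal{F}_m\}$, $P \in M$, the associated martingale for a regular set of measures $M$. Let $f_N$ be an $\mathcal{F}_N$-measurable integrable random variable ($N < \infty$) with $\sup_{P\in M} E^P |f_N| < \infty$, and suppose there exists $\alpha_0 \in \mathbb{R}$ such that $f_N \le \alpha_0 M_N$ pointwise. Then the process defined by $h_m = \alpha_0 M_m$ for $m < N$ and $h_m = f_N - \alpha_0 M_N + \alpha_0 M_m$ for $m \ge N$ (so $h_N = f_N$) is a local regular super-martingale relative to $M$. -/

import Mathlib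

open MeasureTheory Filter

/-- Corollary 5.1: if `f_N ≤ α₀ M_N` pointwise, where `M_m = E^P[ξ | ℱ m]` (`ξ ∈ A₀`) is the
martingale of a regular set of measures `M`, then the process equal to `α₀ M_m` for `m < N`
and to `f_N - α₀ M_N + α₀ M_m` for `m ≥ N` is a local regular super-martingale relative
to `M`. -/
theorem stmt17 {Ω : Type*} {m0 : MeasurableSpace Ω} (ℱ : Filtration ℕ m0)
    (M : Set (Measure Ω))
    (hprob : ∀ P ∈ M, IsProbabilityMeasure P)
    (hequiv : ∀ P ∈ M, ∀ Q ∈ M, P ≪ Q)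
    (ξ : Ω → ℝ) (hξpos : ∀ ω, 0 ≤ ξ ω)
    (hξint : ∀ P ∈ M, Integrable ξ P) (hξone : ∀ P ∈ M, ∫ ω, ξ ω ∂P = 1)
    (Mart : ℕ → Ω → ℝ)
    (hMmart : ∀ P ∈ M, Martingale Mart ℱ P)
    (hMcond : ∀ P ∈ M, ∀ m : ℕ, Mart m =ᵐ[P] P[ξ | ℱ m])
    (N : ℕ) (fN : Ω → ℝ)
    (hfNmeas : StronglyMeasurable[ℱ N] fN)
    (hfNint : ∀ P ∈ M, Integrable fN P)
    (hfNbdd : ∃ C : ℝ, ∀ P ∈ M, ∫ ω, |fN ω| ∂P ≤ C)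
    (α0 : ℝ) (hmaj : ∀ ω, fN ω ≤ α0 * Mart N ω)
    (h : ℕ → Ω → ℝ)
    (hdef : ∀ m ω, h m ω =
      if m < N then α0 * Mart m ω else fN ω - α0 * Mart N ω + α0 * Mart m ω) :
    (∀ P ∈ M, Supermartingale h ℱ P) ∧
    ∃ g : ℕ → Ω → ℝ,
      Adapted ℱ g ∧ (∀ m ω, 0 ≤ g m ω) ∧ (∀ ω, g 0 ω = 0) ∧
      (∀ m ω, g m ω ≤ g (m + 1) ω) ∧
      (∀ m, ∃ C : ℝ, ∀ P ∈ M, ∫ ω, g m ω ∂P ≤ C) ∧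
      (∀ P ∈ M, Martingale (fun m ω => h m ω + g m ω) ℱ P) := by
  classical
  by_cases hMne : M.Nonempty
  swap
  · refine ⟨fun P hP => absurd ⟨P, hP⟩ hMne, fun _ _ => 0, fun m => measurable_const,
      fun m ω => le_refl 0, fun ω => rfl, fun m ω => le_refl 0,
      fun m => ⟨0, fun P hP => absurd ⟨P, hP⟩ hMne⟩, fun P hP => absurd ⟨P, hP⟩ hMne⟩
  obtain ⟨P0, hP0⟩ := hMne
  have hMadp : StronglyAdapted ℱ Mart := (hMmart P0 hP0).stronglyAdapted
  set D : ℕ → Ω → ℝ := fun m ω => if m < N then 0 else fN ω - α0 * Mart N ω with hDdef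
  have hEq : h = α0 • Mart + D := by
    funext m ω
    rw [hdef]
    by_cases hc : m < N <;> simp [hDdef, hc] <;> ring
  have hDadp : StronglyAdapted ℱ D := by
    intro m
    by_cases hc : m < N
    · simpa [hDdef, hc] using (stronglyMeasurable_const : StronglyMeasurable[ℱ m] (fun _ : Ω => (0:ℝ)))
    · have hNm : N ≤ m := le_of_not_gt hc
      have : StronglyMeasurable[ℱ m] (fun ω => fN ω - α0 * Mart N ω) :=
        (hfNmeas.mono (ℱ.mono hNm)).sub (((hMadp N).mono (ℱ.mono hNm)).const_mul α0)
      simpa [hDdef, hc] using this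
  have hDint : ∀ P ∈ M, ∀ m, Integrable (D m) P := by
    intro P hP m
    by_cases hc : m < N
    · simpa [hDdef, hc] using (integrable_zero Ω ℝ P)
    · have : Integrable (fun ω => fN ω - α0 * Mart N ω) P :=
        (hfNint P hP).sub (((hMmart P hP).integrable N).const_mul α0)
      simpa [hDdef, hc] using this
  have hDsuper : ∀ P ∈ M, Supermartingale D ℱ P := by
    intro P hP
    haveI := hprob P hP
    refine supermartingale_nat hDadp (hDint P hP) fun i => ?_
    rcases lt_trichotomy (i + 1) N with h1 | h1 | h1
    · have hi : i < N := Nat.lt_of_succ_lt h1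
      have : D (i + 1) = 0 := by funext ω; simp [hDdef, h1]
      rw [this, condExp_zero]
      filter_upwards with ω
      simp [hDdef, hi]
    · have hi : i < N := h1 ▸ Nat.lt_succ_self i
      have hD1 : D (i + 1) = fun ω => fN ω - α0 * Mart N ω := by
        funext ω; simp [hDdef, h1]
      have hle : D (i + 1) ≤ᵐ[P] 0 := by
        filter_upwards with ω
        rw [hD1]
        simpa using sub_nonpos.2 (hmaj ω)
      refine (condExp_nonpos hle).trans ?_
      filter_upwards with ω
      simp [hDdef, hi]
    · have hi : N ≤ i := Nat.lt_succ_iff.mp h1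
      have hi1 : ¬ i + 1 < N := by omega
      have hci : ¬ i < N := not_lt.2 hi
      have hD1 : D (i + 1) = D i := by funext ω; simp [hDdef, hi1, hci]
      rw [hD1, condExp_of_stronglyMeasurable (ℱ.le i) (hDadp i) (hDint P hP i)]
  have hMsmul : ∀ P ∈ M, Martingale (α0 • Mart) ℱ P := fun P hP => (hMmart P hP).smul α0
  have hSuper : ∀ P ∈ M, Supermartingale h ℱ P := by
    intro P hP
    rw [hEq]
    exact ((hMsmul P hP).supermartingale).add (hDsuper P hP)
  refine ⟨hSuper, ?_⟩
  rcases Nat.eq_zero_or_pos N with hN0 | hNpos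
  · -- N = 0 : take g = 0, h itself is a martingale
    refine ⟨fun _ _ => 0, fun m => measurable_const, fun m ω => le_refl 0,
      fun ω => rfl, fun m ω => le_refl 0, fun m => ⟨0, fun P hP => by simp⟩, ?_⟩
    intro P hP
    haveI := hprob P hP
    have hhg : (fun m ω => h m ω + (0:ℝ)) = h := by funext m ω; simp
    rw [hhg, hEq]
    refine (hMsmul P hP).add (martingale_nat hDadp (hDint P hP) fun i => ?_)
    have hi : ¬ i < N := by omega
    have hi1 : ¬ i + 1 < N := by omega
    have hD1 : D (i + 1) = D i := by funext ω; simp [hDdef, hi1, hi]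
    rw [hD1, condExp_of_stronglyMeasurable (ℱ.le i) (hDadp i) (hDint P hP i)]
  · -- N ≥ 1 : take g m = if m < N then 0 else α0 * Mart N - fN
    obtain ⟨C, hC⟩ := hfNbdd
    refine ⟨fun m ω => if m < N then 0 else α0 * Mart N ω - fN ω, ?_, ?_, ?_, ?_, ?_, ?_⟩
    · intro m
      by_cases hc : m < N
      · simpa [hc] using (stronglyMeasurable_const : StronglyMeasurable[ℱ m] (fun _ : Ω => (0:ℝ)))
      · have hNm : N ≤ m := le_of_not_gt hc
        have : StronglyMeasurable[ℱ m] (fun ω => α0 * Mart N ω - fN ω) :=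
          (((hMadp N).mono (ℱ.mono hNm)).const_mul α0).sub (hfNmeas.mono (ℱ.mono hNm))
        simpa [hc] using this.measurable
    · intro m ω
      by_cases hc : m < N
      · simp [hc]
      · simpa [hc] using sub_nonneg.2 (hmaj ω)
    · intro ω; simp [hNpos]
    · intro m ω
      by_cases hc : m + 1 < N
      · simp [hc, Nat.lt_of_succ_lt hc]
      · by_cases hc2 : m < N
        · simpa [hc, hc2] using sub_nonneg.2 (hmaj ω)
        · simp [hc, hc2]
    · intro m
      refine ⟨|α0| + max C 0, fun P hP => ?_⟩
      haveI := hprob P hP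
      have hCnn : (0:ℝ) ≤ max C 0 := le_max_right _ _
      by_cases hc : m < N
      · simp only [hc, if_true]
        rw [integral_const]
        simp
        positivity
      · have hMN1 : ∫ ω, Mart N ω ∂P = 1 := by
          rw [integral_congr_ae (hMcond P hP N), integral_condExp (ℱ.le N)]
          exact hξone P hP
        have hint : ∫ ω, (if m < N then (0:ℝ) else α0 * Mart N ω - fN ω) ∂P
            = α0 * ∫ ω, Mart N ω ∂P - ∫ ω, fN ω ∂P := by
          simp only [hc, if_false]
          rw [integral_sub (((hMmart P hP).integrable N).const_mul α0) (hfNint P hP),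
            integral_const_mul]
        rw [hint, hMN1, mul_one]
        have h1 : α0 ≤ |α0| := le_abs_self α0
        have h2 : -∫ ω, fN ω ∂P ≤ max C 0 := by
          have habs : |∫ ω, fN ω ∂P| ≤ ∫ ω, |fN ω| ∂P := by
            simpa [Real.norm_eq_abs] using norm_integral_le_integral_norm (μ := P) fN
          have h3 : ∫ ω, |fN ω| ∂P ≤ C := hC P hP
          have := neg_le_of_abs_le habs
          linarith [le_max_left C (0:ℝ)]
        linarith
    · intro P hP
      have hhg : (fun m ω => h m ω + (if m < N then 0 else α0 * Mart N ω - fN ω))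
          = α0 • Mart := by
        funext m ω
        rw [hdef]
        by_cases hc : m < N <;> simp [hc] <;> ring
      rw [hhg]
      exact hMsmul P hP
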